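/- arXiv:1006.5931 — 10 statements merged into one kernel-verified Lean document; each statement's English description precedes it below -/
import Mathlib

section
/- Let M = -(c(η_A + μ_A) + μ_A μ_m + η_A(μ_m - μ_b)) and suppose M > 0 and K = k N_h. Then the point E₂* = (N_h, 0, 0, k N_h M/(η_A μ_b), k N_h M/(μ_b μ_m + c μ_b), 0, 0), with the adjustment that S_m satisfies η_A A_m = (μ_m + c)S_m and A_m satisfies μ_b(1 - A_m/K)S_m = (η_A + μ_A)A_m, is an equilibrium of the dengue ODE system with I_h = E_h = E_m = I_m = 0. -/
theorem BRDFE_equilibrium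
    (μh B βmh βhm νh ηh μb k ηA μA μm ηm c Nh : ℝ)
    (hμh : 0 < μh) (hB : 0 < B) (hβmh : 0 < βmh) (hβhm : 0 < βhm)
    (hνh : 0 < νh) (hηh : 0 < ηh) (hμb : 0 < μb) (hk : 0 < k)
    (hηA : 0 < ηA) (hμA : 0 < μA) (hμm : 0 < μm) (hηm : 0 < ηm)
    (hc : 0 ≤ c) (hNh : 0 < Nh)
    (hM : 0 < -(c * (ηA + μA) + μA * μm + ηA * (μm - μb))) :
    let M : ℝ := -(c * (ηA + μA) + μA * μm + ηA * (μm - μb))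
    let K : ℝ := k * Nh
    let Sh : ℝ := Nh; let Eh : ℝ := 0; let Ih : ℝ := 0
    let Am : ℝ := k * Nh * M / (ηA * μb)
    let Sm : ℝ := k * Nh * M / (μb * μm + c * μb)
    let Em : ℝ := 0; let Im : ℝ := 0
    (ηA * Am = (μm + c) * Sm) ∧
    (μb * (1 - Am / K) * Sm = (ηA + μA) * Am) ∧
    μh * Nh - (B * βmh * Im / Nh + μh) * Sh = 0 ∧
    B * βmh * (Im / Nh) * Sh - (νh + μh) * Eh = 0 ∧
    νh * Eh - (ηh + μh) * Ih = 0 ∧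
    μb * (1 - Am / K) * (Sm + Em + Im) - (ηA + μA) * Am = 0 ∧
    -(B * βhm * Ih / Nh + μm) * Sm + ηA * Am - c * Sm = 0 ∧
    B * βhm * (Ih / Nh) * Sm - (μm + ηm) * Em - c * Em = 0 ∧
    ηm * Em - μm * Im - c * Im = 0 := by
  intro M K Sh Eh Ih Am Sm Em Im
  have hηAμb : ηA * μb ≠ 0 := by positivity
  have hden : μb * μm + c * μb ≠ 0 := by positivity
  have hK : K ≠ 0 := by positivity
  have hNh' : Nh ≠ 0 := ne_of_gt hNh
  have h1 : ηA * Am = (μm + c) * Sm := by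
    simp only [Am, Sm, M]
    field_simp
  have h2 : μb * (1 - Am / K) * Sm = (ηA + μA) * Am := by
    simp only [Am, Sm, M, K]
    field_simp
    ring
  refine ⟨h1, h2, ?_, ?_, ?_, ?_, ?_, ?_, ?_⟩
  · simp [Im, Sh]
  · simp [Im, Eh]
  · simp [Eh, Ih]
  · simpa [Em, Im] using sub_eq_zero.mpr h2
  · simp [Ih]; linarith [h1]
  · simp [Ih, Em]
  · simp [Em, Im]
end

section
/- If all disease compartments vanish (E_h = I_h = E_m = I_m = 0) at an equilibrium of the dengue ODE system, then S_h = N_h, and either (A_m, S_m) = (0,0) or A_m = K·M/(η_A μ_b) and S_m = η_A A_m/(μ_m + c), where M = -(c(η_A + μ_A) + μ_A μ_m + η_A(μ_m - μ_b)). -/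
theorem disease_free_equilibria_classification
    (μh B βmh βhm νh ηh μb K ηA μA μm ηm c Nh : ℝ)
    (Sh Eh Ih Am Sm Em Im : ℝ)
    (hμh : 0 < μh) (hB : 0 < B) (hβmh : 0 < βmh) (hβhm : 0 < βhm)
    (hνh : 0 < νh) (hηh : 0 < ηh) (hμb : 0 < μb) (hK : 0 < K)
    (hηA : 0 < ηA) (hμA : 0 < μA) (hμm : 0 < μm) (hηm : 0 < ηm)
    (hc : 0 ≤ c) (hNh : 0 < Nh)
    (hEh : Eh = 0) (hIh : Ih = 0) (hEm : Em = 0) (hIm : Im = 0)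
    (e1 : μh * Nh - (B * βmh * Im / Nh + μh) * Sh = 0)
    (e2 : B * βmh * (Im / Nh) * Sh - (νh + μh) * Eh = 0)
    (e3 : νh * Eh - (ηh + μh) * Ih = 0)
    (e4 : μb * (1 - Am / K) * (Sm + Em + Im) - (ηA + μA) * Am = 0)
    (e5 : -(B * βhm * Ih / Nh + μm) * Sm + ηA * Am - c * Sm = 0)
    (e6 : B * βhm * (Ih / Nh) * Sm - (μm + ηm) * Em - c * Em = 0)
    (e7 : ηm * Em - μm * Im - c * Im = 0) :
    Sh = Nh ∧
      ((Am = 0 ∧ Sm = 0) ∨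
        (Am = K * (-(c * (ηA + μA) + μA * μm + ηA * (μm - μb))) / (ηA * μb) ∧
          Sm = ηA * Am / (μm + c))) := by
  subst hEh hIh hEm hIm
  have hμmc : 0 < μm + c := by linarith
  -- Sh = Nh
  have hSh : Sh = Nh := by
    have : μh * Nh - μh * Sh = 0 := by
      simp only [mul_zero, zero_mul, zero_div, zero_add] at e1; linarith
    have := mul_left_cancel₀ hμh.ne' (by linarith : μh * Nh = μh * Sh)
    linarith
  refine ⟨hSh, ?_⟩
  -- Sm in terms of Am
  have hSm : Sm = ηA * Am / (μm + c) := by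
    field_simp at e5 ⊢
    nlinarith [e5]
  rcases eq_or_ne Am 0 with h0 | h0
  · left
    refine ⟨h0, ?_⟩
    rw [hSm, h0]; ring
  · right
    refine ⟨?_, hSm⟩
    rw [hSm] at e4
    have hK' := hK.ne'
    have hμmc' := hμmc.ne'
    field_simp at e4
    have key : μb * ηA * (K - Am) = K * ((ηA + μA) * (μm + c)) := by
      have := mul_left_cancel₀ h0 (show Am * (μb * ηA * (K - Am)) = Am * (K * ((ηA + μA) * (μm + c))) by nlinarith [e4])
      linarith
    have hden : (ηA * μb) ≠ 0 := by positivity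
    rw [eq_div_iff hden]
    linear_combination -key
end

section
/- With positive parameters and M > 0, define R₀² = B² k β_hm β_mh η_m ν_h M / (μ_b (η_h + μ_h)(c + μ_m)²(c + η_m + μ_m)(μ_h + ν_h)). Then R₀² is strictly decreasing as a function of c ≥ 0 on the interval where M > 0. -/
theorem R0sq_strictAntiOn
    (B k βhm βmh ηm νh μb ηh μh μm ηA μA : ℝ)
    (hB : 0 < B) (hk : 0 < k) (hβhm : 0 < βhm) (hβmh : 0 < βmh)
    (hηm : 0 < ηm) (hνh : 0 < νh) (hμb : 0 < μb) (hηh : 0 < ηh)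
    (hμh : 0 < μh) (hμm : 0 < μm) (hηA : 0 < ηA) (hμA : 0 < μA) :
    StrictAntiOn
      (fun c : ℝ =>
        B ^ 2 * k * βhm * βmh * ηm * νh * (-(c * (ηA + μA) + μA * μm + ηA * (μm - μb))) /
          (μb * (ηh + μh) * (c + μm) ^ 2 * (c + ηm + μm) * (μh + νh)))
      {c : ℝ | 0 ≤ c ∧ 0 < -(c * (ηA + μA) + μA * μm + ηA * (μm - μb))} := by
  intro a ha b hb hab
  obtain ⟨ha0, haM⟩ := ha
  obtain ⟨hb0, hbM⟩ := hb
  have hA : (0:ℝ) < B ^ 2 * k * βhm * βmh * ηm * νh := by positivity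
  have hDa : (0:ℝ) < μb * (ηh + μh) * (a + μm) ^ 2 * (a + ηm + μm) * (μh + νh) := by
    positivity
  have hDb : (0:ℝ) < μb * (ηh + μh) * (b + μm) ^ 2 * (b + ηm + μm) * (μh + νh) := by
    positivity
  have hDab : μb * (ηh + μh) * (a + μm) ^ 2 * (a + ηm + μm) * (μh + νh)
      < μb * (ηh + μh) * (b + μm) ^ 2 * (b + ηm + μm) * (μh + νh) := by
    gcongr <;> linarith
  have hNba : B ^ 2 * k * βhm * βmh * ηm * νh * (-(b * (ηA + μA) + μA * μm + ηA * (μm - μb)))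
      < B ^ 2 * k * βhm * βmh * ηm * νh * (-(a * (ηA + μA) + μA * μm + ηA * (μm - μb))) := by
    apply mul_lt_mul_of_pos_left _ hA
    nlinarith [mul_lt_mul_of_pos_right hab (show (0:ℝ) < ηA + μA by linarith)]
  have hNa : 0 < B ^ 2 * k * βhm * βmh * ηm * νh * (-(a * (ηA + μA) + μA * μm + ηA * (μm - μb))) :=
    mul_pos hA haM
  simp only
  calc B ^ 2 * k * βhm * βmh * ηm * νh * (-(b * (ηA + μA) + μA * μm + ηA * (μm - μb))) /
        (μb * (ηh + μh) * (b + μm) ^ 2 * (b + ηm + μm) * (μh + νh))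
      < B ^ 2 * k * βhm * βmh * ηm * νh * (-(a * (ηA + μA) + μA * μm + ηA * (μm - μb))) /
        (μb * (ηh + μh) * (b + μm) ^ 2 * (b + ηm + μm) * (μh + νh)) := by
        exact (div_lt_div_iff_of_pos_right hDb).mpr hNba
    _ < B ^ 2 * k * βhm * βmh * ηm * νh * (-(a * (ηA + μA) + μA * μm + ηA * (μm - μb))) /
        (μb * (ηh + μh) * (a + μm) ^ 2 * (a + ηm + μm) * (μh + νh)) :=
        div_lt_div_of_pos_left hNa hDa hDab
end

section
/- With the Cape Verde parameter values N_h = 480000, B = 1, β_mh = β_hm = 0.375, μ_h = 1/(71·365), η_h = 1/3, μ_m = 1/11, μ_b = 6, μ_A = 1/4, η_A = 0.08, η_m = 1/11, ν_h = 1/4, k = 3, the basic reproduction number satisfies R₀ < 1 if c > 0.084 (with c small enough that M > 0). -/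
theorem capeVerde_R0_lt_one :
    let Nh : ℝ := 480000; let B : ℝ := 1; let βmh : ℝ := 0.375; let βhm : ℝ := 0.375
    let μh : ℝ := 1 / (71 * 365); let ηh : ℝ := 1 / 3; let μm : ℝ := 1 / 11
    let μb : ℝ := 6; let μA : ℝ := 1 / 4; let ηA : ℝ := 0.08
    let ηm : ℝ := 1 / 11; let νh : ℝ := 1 / 4; let k : ℝ := 3
    ∀ c : ℝ, 0.084 < c →
      0 < -(c * (ηA + μA) + μA * μm + ηA * (μm - μb)) →
      B ^ 2 * k * βhm * βmh * ηm * νh * (-(c * (ηA + μA) + μA * μm + ηA * (μm - μb))) /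
          (μb * (ηh + μh) * (c + μm) ^ 2 * (c + ηm + μm) * (μh + νh)) < 1 := by
  intro Nh B βmh βhm μh ηh μm μb μA ηA ηm νh k c hc hM
  simp only [Nh, B, βmh, βhm, μh, ηh, μm, μb, μA, ηA, ηm, νh, k] at *
  have hc0 : (0:ℝ) < c := by linarith
  have hden : (0:ℝ) < 6 * (1/3 + 1/(71*365)) * (c + 1/11) ^ 2 * (c + 1/11 + 1/11) * (1/(71*365) + 1/4) := by
    positivity
  rw [div_lt_one hden]
  nlinarith [sq_nonneg (c - 0.084), sq_nonneg c, mul_pos hc0 hc0,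
    mul_pos (mul_pos hc0 hc0) hc0, sq_nonneg (c - 0.084) , mul_nonneg (sq_nonneg (c - 0.084)) hc0.le,
    mul_nonneg (mul_nonneg (sq_nonneg (c - 0.084)) hc0.le) hc0.le]
end

section
/- With the Cape Verde parameter values, R₀²(c) = 1 has a unique solution c* in the interval (0.083, 0.084), and R₀²(c) > 1 for 0 ≤ c < c*. -/
/-- Numerator of R₀² with Cape Verde parameters. -/
noncomputable def cvN (c : ℝ) : ℝ :=
  (1:ℝ) ^ 2 * 3 * (3 / 8) * (3 / 8) * (1 / 11) * (1 / 4) *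
    (-(c * (2 / 25 + 1 / 4) + (1 / 4) * (1 / 11) + (2 / 25) * (1 / 11 - 6)))

/-- Denominator of R₀² with Cape Verde parameters. -/
noncomputable def cvD (c : ℝ) : ℝ :=
  6 * (1 / 3 + 1 / 25915) * (c + 1 / 11) ^ 2 * (c + 1 / 11 + 1 / 11) * (1 / 25915 + 1 / 4)

lemma cvD_pos {c : ℝ} (hc : 0 ≤ c) : 0 < cvD c := by
  unfold cvD; positivity

lemma cvG_anti {a b : ℝ} (ha : 0 ≤ a) (hab : a < b) :
    cvN b - cvD b < cvN a - cvD a := by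
  unfold cvN cvD
  nlinarith [sq_nonneg a, sq_nonneg b, sq_nonneg (a + b), mul_pos (lt_of_le_of_lt ha hab)
    (lt_of_le_of_lt ha hab), mul_nonneg ha ha, mul_nonneg (mul_nonneg ha ha) ha]

lemma cvG_cont : ContinuousOn (fun c => cvN c - cvD c) (Set.Icc (0.083 : ℝ) 0.084) := by
  unfold cvN cvD
  fun_prop

theorem capeVerde_critical_control :
    let ηA : ℝ := 2 / 25; let μA : ℝ := 1 / 4; let μb : ℝ := 6; let μm : ℝ := 1 / 11
    let ηm : ℝ := 1 / 11; let νh : ℝ := 1 / 4; let ηh : ℝ := 1 / 3; let μh : ℝ := 1 / 25915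
    let B : ℝ := 1; let k : ℝ := 3; let βmh : ℝ := 3 / 8; let βhm : ℝ := 3 / 8
    let R0sq : ℝ → ℝ := fun c =>
      B ^ 2 * k * βhm * βmh * ηm * νh * (-(c * (ηA + μA) + μA * μm + ηA * (μm - μb))) /
        (μb * (ηh + μh) * (c + μm) ^ 2 * (c + ηm + μm) * (μh + νh))
    ∃ cstar ∈ Set.Ioo (0.083 : ℝ) 0.084,
      R0sq cstar = 1 ∧
      (∀ c ∈ Set.Ioo (0.083 : ℝ) 0.084, R0sq c = 1 → c = cstar) ∧
      ∀ c : ℝ, 0 ≤ c → c < cstar → 1 < R0sq c := by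
  show ∃ cstar ∈ Set.Ioo (0.083 : ℝ) 0.084,
      cvN cstar / cvD cstar = 1 ∧
      (∀ c ∈ Set.Ioo (0.083 : ℝ) 0.084, cvN c / cvD c = 1 → c = cstar) ∧
      ∀ c : ℝ, 0 ≤ c → c < cstar → 1 < cvN c / cvD c
  have hivt := intermediate_value_Ioo' (a := (0.083 : ℝ)) (b := 0.084)
    (by norm_num) cvG_cont
  have h0 : (0 : ℝ) ∈ Set.Ioo (cvN 0.084 - cvD 0.084) (cvN 0.083 - cvD 0.083) := by
    constructor <;> (unfold cvN cvD; norm_num)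
  obtain ⟨cstar, hcmem, hcz⟩ := hivt h0
  have hc0 : (0 : ℝ) ≤ cstar := le_of_lt (lt_trans (by norm_num) hcmem.1)
  simp only at hcz
  have hND : cvN cstar = cvD cstar := by linarith [hcz.le, hcz.ge]
  refine ⟨cstar, hcmem, ?_, ?_, ?_⟩
  · rw [hND, div_self (cvD_pos hc0).ne']
  · intro c hc hc1
    have hc0' : (0 : ℝ) ≤ c := le_of_lt (lt_trans (by norm_num) hc.1)
    have hNc : cvN c = cvD c := by
      field_simp [(cvD_pos hc0').ne'] at hc1; linarith
    by_contra hne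
    rcases lt_or_gt_of_ne hne with h | h
    · have := cvG_anti hc0' h; rw [hNc, hND] at this; simp at this
    · have := cvG_anti hc0 h; rw [hNc, hND] at this; simp at this
  · intro c hc0' hlt
    have := cvG_anti hc0' hlt
    rw [hND] at this
    rw [one_lt_div (cvD_pos hc0')]
    linarith
end

section
/- Consider the linear subsystem for the infected compartments at the BRDFE: x' = F x - V x where x = (E_h, I_h, E_m, I_m), F contains the new-infection terms and V the transition terms. All eigenvalues of the Jacobian F - V have negative real part if and only if ρ(F V⁻¹) < 1, where ρ(F V⁻¹)² equals R₀² as given. -/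
open Matrix ENNReal

private theorem my_det_fin_four {R : Type*} [CommRing R] (A : Matrix (Fin 4) (Fin 4) R) :
    det A =
      A 0 0 * (A 1 1 * (A 2 2 * A 3 3 - A 2 3 * A 3 2) - A 1 2 * (A 2 1 * A 3 3 - A 2 3 * A 3 1)
        + A 1 3 * (A 2 1 * A 3 2 - A 2 2 * A 3 1))
      - A 0 1 * (A 1 0 * (A 2 2 * A 3 3 - A 2 3 * A 3 2) - A 1 2 * (A 2 0 * A 3 3 - A 2 3 * A 3 0)
        + A 1 3 * (A 2 0 * A 3 2 - A 2 2 * A 3 0))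
      + A 0 2 * (A 1 0 * (A 2 1 * A 3 3 - A 2 3 * A 3 1) - A 1 1 * (A 2 0 * A 3 3 - A 2 3 * A 3 0)
        + A 1 3 * (A 2 0 * A 3 1 - A 2 1 * A 3 0))
      - A 0 3 * (A 1 0 * (A 2 1 * A 3 2 - A 2 2 * A 3 1) - A 1 1 * (A 2 0 * A 3 2 - A 2 2 * A 3 0)
        + A 1 2 * (A 2 0 * A 3 1 - A 2 1 * A 3 0)) := by
  rw [Matrix.det_succ_row_zero]
  simp [Fin.sum_univ_succ, Matrix.det_fin_three, Matrix.submatrix_apply, Fin.succAbove,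
    Fin.succ_zero_eq_one, Fin.succ_one_eq_two,
    show ((2:Fin 3).succ : Fin 4) = 3 from rfl, show (Fin.castSucc 2 : Fin 4) = 2 from rfl]
  ring

private theorem mem_spec_iff {A : Matrix (Fin 4) (Fin 4) ℂ} {μ : ℂ} :
    μ ∈ spectrum ℂ A ↔ (μ • (1 : Matrix (Fin 4) (Fin 4) ℂ) - A).det = 0 := by
  rw [spectrum.mem_iff, Algebra.algebraMap_eq_smul_one, ← not_iff_not, not_not,
    Matrix.isUnit_iff_isUnit_det, isUnit_iff_ne_zero]

set_option maxHeartbeats 2000000 in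
theorem nextGeneration_stability
    (B βmh βhm νh ηh μh μm ηm c k μb Nh ηA μA : ℝ)
    (hB : 0 < B) (hβmh : 0 < βmh) (hβhm : 0 < βhm) (hνh : 0 < νh)
    (hηh : 0 < ηh) (hμh : 0 < μh) (hμm : 0 < μm) (hηm : 0 < ηm)
    (hc : 0 ≤ c) (hk : 0 < k) (hμb : 0 < μb) (hNh : 0 < Nh)
    (hηA : 0 < ηA) (hμA : 0 < μA)
    (hM : 0 < -(c * (ηA + μA) + μA * μm + ηA * (μm - μb))) :
    let M : ℝ := -(c * (ηA + μA) + μA * μm + ηA * (μm - μb))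
    let Smstar : ℝ := k * Nh * M / (μb * (μm + c))
    let F : Matrix (Fin 4) (Fin 4) ℝ :=
      !![0, 0, 0, B * βmh;
         0, 0, 0, 0;
         0, B * βhm * Smstar / Nh, 0, 0;
         0, 0, 0, 0]
    let V : Matrix (Fin 4) (Fin 4) ℝ :=
      !![νh + μh, 0, 0, 0;
         -νh, ηh + μh, 0, 0;
         0, 0, c + ηm + μm, 0;
         0, 0, -ηm, c + μm]
    let R0sq : ℝ := B ^ 2 * k * βhm * βmh * ηm * νh * M /
      (μb * (ηh + μh) * (c + μm) ^ 2 * (c + ηm + μm) * (μh + νh))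
    (spectralRadius ℂ ((F * V⁻¹).map (Complex.ofReal : ℝ → ℂ))) ^ 2
        = ENNReal.ofReal R0sq ∧
    ((∀ z ∈ spectrum ℂ ((F - V).map (Complex.ofReal : ℝ → ℂ)), z.re < 0) ↔
      spectralRadius ℂ ((F * V⁻¹).map (Complex.ofReal : ℝ → ℂ)) < 1) := by
  intro M Smstar F V R0sq
  have hM0 : (0:ℝ) < M := hM
  have hSm : Smstar = k * Nh * M / (μb * (μm + c)) := rfl
  have hR0 : R0sq = B ^ 2 * k * βhm * βmh * ηm * νh * M /
      (μb * (ηh + μh) * (c + μm) ^ 2 * (c + ηm + μm) * (μh + νh)) := rfl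
  -- positivity facts
  have hd0 : (0:ℝ) < νh + μh := by linarith
  have hd1 : (0:ℝ) < ηh + μh := by linarith
  have hd2 : (0:ℝ) < c + ηm + μm := by linarith
  have hd3 : (0:ℝ) < c + μm := by linarith
  have hmc : (0:ℝ) < μm + c := by linarith
  have hNh' : Nh ≠ 0 := ne_of_gt hNh
  have hμb' : μb ≠ 0 := ne_of_gt hμb
  have hd0' : (νh + μh) ≠ 0 := ne_of_gt hd0
  have hd1' : (ηh + μh) ≠ 0 := ne_of_gt hd1
  have hd2' : (c + ηm + μm) ≠ 0 := ne_of_gt hd2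
  have hd3' : (c + μm) ≠ 0 := ne_of_gt hd3
  have hmc' : (μm + c) ≠ 0 := ne_of_gt hmc
  have hSmpos : 0 < Smstar := by
    rw [hSm]; positivity
  have hr : 0 < R0sq := by rw [hR0]; positivity
  set bE : ℝ := B * βhm * Smstar / Nh with hbE
  have hbEpos : 0 < bE := by rw [hbE]; positivity
  -- inverse of V
  have hVinv : V⁻¹ = !![1/(νh+μh), 0, 0, 0;
      νh/((νh+μh)*(ηh+μh)), 1/(ηh+μh), 0, 0;
      0, 0, 1/(c+ηm+μm), 0;
      0, 0, ηm/((c+ηm+μm)*(c+μm)), 1/(c+μm)] := by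
    apply Matrix.inv_eq_right_inv
    show (!![νh + μh, 0, 0, 0; -νh, ηh + μh, 0, 0; 0, 0, c + ηm + μm, 0;
        0, 0, -ηm, c + μm] : Matrix (Fin 4) (Fin 4) ℝ) * _ = 1
    ext i j
    fin_cases i <;> fin_cases j <;>
      simp [Matrix.mul_apply, Fin.sum_univ_four, Matrix.one_apply, vecHead, vecTail] <;>
      field_simp <;> ring
  -- the next generation matrix
  have hK : F * V⁻¹ = !![0, 0, B * βmh * ηm/((c+ηm+μm)*(c+μm)), B * βmh/(c+μm);
      0, 0, 0, 0;
      bE * νh/((νh+μh)*(ηh+μh)), bE/(ηh+μh), 0, 0;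
      0, 0, 0, 0] := by
    rw [hVinv]
    show (!![0, 0, 0, B * βmh; 0, 0, 0, 0; 0, bE, 0, 0; 0, 0, 0, 0]
        : Matrix (Fin 4) (Fin 4) ℝ) * _ = _
    ext i j
    fin_cases i <;> fin_cases j <;>
      simp [Matrix.mul_apply, Fin.sum_univ_four, vecHead, vecTail] <;>
      field_simp <;> ring
  -- key scalar identity
  have hkey : B * βmh * ηm/((c+ηm+μm)*(c+μm)) * (bE * νh/((νh+μh)*(ηh+μh))) = R0sq := by
    rw [hbE, hSm, hR0]; field_simp; ring
  have hkeyC : (↑(B * βmh * ηm/((c+ηm+μm)*(c+μm))) : ℂ) * (↑(bE * νh/((νh+μh)*(ηh+μh))) : ℂ)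
      = (R0sq : ℂ) := by
    rw [← Complex.ofReal_mul, hkey]
  -- determinant of μ•1 - F V⁻¹
  have hdetK : ∀ μ : ℂ, (μ • (1 : Matrix (Fin 4) (Fin 4) ℂ)
      - (F * V⁻¹).map (Complex.ofReal : ℝ → ℂ)).det = μ^2 * (μ^2 - (R0sq : ℂ)) := by
    intro μ
    rw [my_det_fin_four]
    simp [hK, Matrix.map_apply, Matrix.smul_apply, Matrix.one_apply, vecHead, vecTail]
    push_cast at hkeyC ⊢
    linear_combination (-(μ^2)) * hkeyC
  set s : ℝ := Real.sqrt R0sq with hsdef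
  have hs0 : 0 ≤ s := Real.sqrt_nonneg _
  have hs2 : s^2 = R0sq := Real.sq_sqrt hr.le
  have hspos : 0 < s := Real.sqrt_pos.mpr hr
  -- spectrum of F V⁻¹
  have hspecK : spectrum ℂ ((F * V⁻¹).map (Complex.ofReal : ℝ → ℂ))
      = {0, (s:ℂ), -(s:ℂ)} := by
    ext μ
    rw [mem_spec_iff, hdetK]
    have hfac : μ^2 * (μ^2 - (R0sq : ℂ)) = μ * (μ * ((μ - s) * (μ + s))) := by
      have h : ((R0sq:ℝ):ℂ) = ((s:ℝ):ℂ)^2 := by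
        rw [← hs2]; push_cast; ring
      rw [h]; ring
    rw [hfac]
    simp only [mul_eq_zero, Set.mem_insert_iff, Set.mem_singleton_iff, sub_eq_zero,
      add_eq_zero_iff_eq_neg]
    tauto
  -- spectral radius of F V⁻¹
  have hnorm : ((‖((s:ℝ):ℂ)‖₊ : ℝ≥0∞)) = ENNReal.ofReal s := by
    rw [Complex.nnnorm_real]; exact Real.enorm_eq_ofReal hs0
  have hρ : spectralRadius ℂ ((F * V⁻¹).map (Complex.ofReal : ℝ → ℂ))
      = ENNReal.ofReal s := by
    apply le_antisymm
    · refine iSup₂_le fun z hz => ?_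
      rw [hspecK] at hz
      rcases hz with rfl | rfl | rfl
      · simp
      · exact le_of_eq hnorm
      · rw [nnnorm_neg]; exact le_of_eq hnorm
    · have hmem : ((s:ℝ):ℂ) ∈ spectrum ℂ ((F * V⁻¹).map (Complex.ofReal : ℝ → ℂ)) := by
        rw [hspecK]; simp
      calc ENNReal.ofReal s = (‖((s:ℝ):ℂ)‖₊ : ℝ≥0∞) := hnorm.symm
        _ ≤ _ := le_iSup₂ (f := fun k (_ : k ∈ spectrum ℂ
            ((F * V⁻¹).map (Complex.ofReal : ℝ → ℂ))) => (‖k‖₊ : ℝ≥0∞)) _ hmem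
  constructor
  · rw [hρ, ← ENNReal.ofReal_pow hs0, hs2]
  -- the stability equivalence
  set D : ℝ := (νh+μh)*(ηh+μh)*(c+ηm+μm)*(c+μm) with hD
  have hDpos : 0 < D := by rw [hD]; positivity
  set P : ℝ := B * βmh * bE * νh * ηm with hPdef
  have hPpos : 0 < P := by rw [hPdef]; positivity
  have hPD : P = R0sq * D := by
    rw [hPdef, hD, hbE, hSm, hR0]; field_simp; ring
  have hFV : F - V = !![-(νh+μh), 0, 0, B*βmh;
      νh, -(ηh+μh), 0, 0;
      0, bE, -(c+ηm+μm), 0;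
      0, 0, ηm, -(c+μm)] := by
    show (!![0, 0, 0, B * βmh; 0, 0, 0, 0; 0, bE, 0, 0; 0, 0, 0, 0]
        : Matrix (Fin 4) (Fin 4) ℝ) -
      !![νh + μh, 0, 0, 0; -νh, ηh + μh, 0, 0; 0, 0, c + ηm + μm, 0; 0, 0, -ηm, c + μm] = _
    ext i j
    fin_cases i <;> fin_cases j <;>
      simp [Matrix.sub_apply, vecHead, vecTail]
  have hdetFV : ∀ μ : ℂ, (μ • (1 : Matrix (Fin 4) (Fin 4) ℂ)
      - (F - V).map (Complex.ofReal : ℝ → ℂ)).det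
      = (μ + ((νh+μh:ℝ):ℂ)) * (μ + ((ηh+μh:ℝ):ℂ)) * (μ + ((c+ηm+μm:ℝ):ℂ))
        * (μ + ((c+μm:ℝ):ℂ)) - ((P:ℝ):ℂ) := by
    intro μ
    rw [my_det_fin_four]
    simp [hFV, Matrix.map_apply, Matrix.smul_apply, Matrix.one_apply, hPdef, vecHead, vecTail]
    push_cast
    ring
  -- reformulate RHS
  have hRHS : (spectralRadius ℂ ((F * V⁻¹).map (Complex.ofReal : ℝ → ℂ)) < 1) ↔ P < D := by
    rw [hρ, ENNReal.ofReal_lt_one, hsdef]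
    rw [show (1:ℝ) = Real.sqrt 1 by simp]
    rw [Real.sqrt_lt_sqrt_iff hr.le]
    constructor
    · intro h
      rw [hPD]
      calc R0sq * D < 1 * D := by exact mul_lt_mul_of_pos_right h hDpos
        _ = D := one_mul D
    · intro h
      have : R0sq * D < 1 * D := by rw [one_mul]; rw [hPD] at h; exact h
      exact lt_of_mul_lt_mul_right this hDpos.le
  rw [hRHS]
  constructor
  · -- if all eigenvalues have negative real part then P < D
    intro hall
    by_contra hPD'
    push_neg at hPD'
    -- find a real nonnegative root by IVT
    set p : ℝ → ℝ := fun t => (t+(νh+μh))*(t+(ηh+μh))*(t+(c+ηm+μm))*(t+(c+μm)) - P with hp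
    have hcont : ContinuousOn p (Set.Icc 0 (P+1)) := by
      apply Continuous.continuousOn
      fun_prop
    have hp0 : p 0 ≤ 0 := by
      have he : p 0 = D - P := by simp only [hp, hD]; ring
      rw [he]; linarith
    have hpt : 0 ≤ p (P+1) := by
      have A1 : P + 1 ≤ (P+1+(νh+μh)) := by linarith
      have A2 : (P+1+(νh+μh)) ≤ (P+1+(νh+μh))*(P+1+(ηh+μh)) :=
        le_mul_of_one_le_right (by linarith) (by linarith)
      have A3 : (P+1+(νh+μh))*(P+1+(ηh+μh))
          ≤ (P+1+(νh+μh))*(P+1+(ηh+μh))*(P+1+(c+ηm+μm)) :=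
        le_mul_of_one_le_right (by positivity) (by linarith)
      have A4 : (P+1+(νh+μh))*(P+1+(ηh+μh))*(P+1+(c+ηm+μm))
          ≤ (P+1+(νh+μh))*(P+1+(ηh+μh))*(P+1+(c+ηm+μm))*(P+1+(c+μm)) :=
        le_mul_of_one_le_right (by positivity) (by linarith)
      simp only [hp]
      linarith
    have h0mem : (0:ℝ) ∈ Set.Icc (p 0) (p (P+1)) := ⟨hp0, hpt⟩
    obtain ⟨t, ht, hroot⟩ := intermediate_value_Icc (by linarith : (0:ℝ) ≤ P+1) hcont h0mem
    have hzmem : ((t:ℝ):ℂ) ∈ spectrum ℂ ((F - V).map (Complex.ofReal : ℝ → ℂ)) := by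
      rw [mem_spec_iff, hdetFV]
      have : ((p t : ℝ) : ℂ) = 0 := by rw [hroot]; simp
      simp only [hp] at this
      push_cast at this ⊢
      linear_combination this
    have := hall _ hzmem
    rw [Complex.ofReal_re] at this
    linarith [ht.1]
  · -- if P < D then all eigenvalues have negative real part
    intro hlt z hz
    rw [mem_spec_iff, hdetFV, sub_eq_zero] at hz
    by_contra hre
    push_neg at hre
    have habs : ∀ d : ℝ, 0 < d → d ≤ ‖z + (d:ℂ)‖ := by
      intro d hd
      have h1 : (z + (d:ℂ)).re = z.re + d := by simp
      calc d ≤ z.re + d := by linarith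
        _ ≤ |(z + (d:ℂ)).re| := by rw [h1]; exact le_abs_self _
        _ ≤ ‖z + (d:ℂ)‖ := Complex.abs_re_le_norm _
    have hprod : D ≤ ‖(z + ((νh+μh:ℝ):ℂ)) * (z + ((ηh+μh:ℝ):ℂ))
        * (z + ((c+ηm+μm:ℝ):ℂ)) * (z + ((c+μm:ℝ):ℂ))‖ := by
      rw [norm_mul, norm_mul, norm_mul, hD]
      gcongr <;>
        first
          | exact hd0.le | exact hd1.le | exact hd2.le | exact hd3.le
          | exact habs _ hd0 | exact habs _ hd1 | exact habs _ hd2 | exact habs _ hd3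
    rw [hz, Complex.norm_real, Real.norm_eq_abs, abs_of_pos hPpos] at hprod
    linarith
end

section
/- The spectral radius of F V⁻¹, for the 4×4 matrices F and V defined from the dengue model at the BRDFE, equals the square root of R₀² = B² β_mh β_hm η_m ν_h S_m* / (N_h (η_h + μ_h)(μ_h + ν_h)(c + η_m + μ_m)(c + μ_m)). -/
set_option maxHeartbeats 1000000

open Matrix

theorem spectralRadius_nextGeneration
    (B βmh βhm νh ηh μh μm ηm c Smstar Nh : ℝ)
    (hB : 0 < B) (hβmh : 0 < βmh) (hβhm : 0 < βhm) (hνh : 0 < νh)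
    (hηh : 0 < ηh) (hμh : 0 < μh) (hμm : 0 < μm) (hηm : 0 < ηm)
    (hc : 0 ≤ c) (hSm : 0 < Smstar) (hNh : 0 < Nh) :
    let F : Matrix (Fin 4) (Fin 4) ℝ :=
      !![0, 0, 0, B * βmh;
         0, 0, 0, 0;
         0, B * βhm * Smstar / Nh, 0, 0;
         0, 0, 0, 0]
    let V : Matrix (Fin 4) (Fin 4) ℝ :=
      !![νh + μh, 0, 0, 0;
         -νh, ηh + μh, 0, 0;
         0, 0, c + ηm + μm, 0;
         0, 0, -ηm, c + μm]
    let R0sq : ℝ := B ^ 2 * βmh * βhm * ηm * νh * Smstar /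
      (Nh * (ηh + μh) * (μh + νh) * (c + ηm + μm) * (c + μm))
    spectralRadius ℂ ((F * V⁻¹).map (Complex.ofReal : ℝ → ℂ))
        = ENNReal.ofReal (Real.sqrt R0sq) ∧
    ∀ z ∈ spectrum ℂ ((F * V⁻¹).map (Complex.ofReal : ℝ → ℂ)),
      z ≠ 0 → z = Real.sqrt R0sq ∨ z = -Real.sqrt R0sq := by
  intro F V R0sq
  have ha : (0:ℝ) < νh + μh := by linarith
  have hb : (0:ℝ) < ηh + μh := by linarith
  have hd : (0:ℝ) < c + ηm + μm := by linarith
  have he : (0:ℝ) < c + μm := by linarith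
  -- explicit inverse of V
  have hVinv : V⁻¹ =
      !![1/(νh+μh), 0, 0, 0;
         νh/((νh+μh)*(ηh+μh)), 1/(ηh+μh), 0, 0;
         0, 0, 1/(c+ηm+μm), 0;
         0, 0, ηm/((c+ηm+μm)*(c+μm)), 1/(c+μm)] := by
    apply Matrix.inv_eq_right_inv
    show V * _ = 1
    ext i j
    fin_cases i <;> fin_cases j <;>
      (simp [V, Matrix.mul_apply, Fin.sum_univ_four, Matrix.one_apply,
        Matrix.vecHead, Matrix.vecTail]; try field_simp; try ring)
  have hM : F * V⁻¹ =
      !![0, 0, B*βmh*ηm/((c+ηm+μm)*(c+μm)), B*βmh/(c+μm);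
         0, 0, 0, 0;
         B*βhm*Smstar/Nh * (νh/((νh+μh)*(ηh+μh))), B*βhm*Smstar/Nh * (1/(ηh+μh)), 0, 0;
         0, 0, 0, 0] := by
    rw [hVinv]
    ext i j
    fin_cases i <;> fin_cases j <;>
      (simp [F, Matrix.mul_apply, Fin.sum_univ_four, Matrix.vecHead, Matrix.vecTail];
        try field_simp; try ring)
  set r : ℝ := Real.sqrt R0sq with hr
  have hR0pos : 0 < R0sq := by
    apply div_pos
    · positivity
    · positivity
  have hr2 : r ^ 2 = R0sq := Real.sq_sqrt hR0pos.le
  set Mc := (F * V⁻¹).map (Complex.ofReal : ℝ → ℂ) with hMc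
  have hdet : ∀ z : ℂ, (algebraMap ℂ (Matrix (Fin 4) (Fin 4) ℂ) z - Mc).det
      = z^2 * (z^2 - (R0sq : ℂ)) := by
    intro z
    have hmat : algebraMap ℂ (Matrix (Fin 4) (Fin 4) ℂ) z - Mc =
        !![z, 0, -(B*βmh*ηm/((c+ηm+μm)*(c+μm)) : ℝ), -(B*βmh/(c+μm) : ℝ);
           0, z, 0, 0;
           -(B*βhm*Smstar/Nh * (νh/((νh+μh)*(ηh+μh))) : ℝ),
             -(B*βhm*Smstar/Nh * (1/(ηh+μh)) : ℝ), z, 0;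
           0, 0, 0, z] := by
      rw [hMc, hM]
      ext i j
      fin_cases i <;> fin_cases j <;>
        simp [Matrix.algebraMap_matrix_apply, Matrix.map_apply, Matrix.vecHead, Matrix.vecTail]
    rw [hmat]
    rw [show (R0sq : ℂ) = ((B*βmh*ηm/((c+ηm+μm)*(c+μm)) : ℝ) : ℂ) *
        ((B*βhm*Smstar/Nh * (νh/((νh+μh)*(ηh+μh))) : ℝ) : ℂ) by
      rw [← Complex.ofReal_mul]; congr 1
      simp only [R0sq]
      field_simp
      ring]
    simp [Matrix.det_succ_row_zero, Fin.sum_univ_succ, Matrix.det_fin_three,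
      Fin.succAbove, Fin.castSucc, Fin.castAdd, Fin.castLE,
      Matrix.vecHead, Matrix.vecTail]
    ring
  have hrC : ((R0sq:ℝ):ℂ) = (r:ℂ)^2 := by rw [← hr2]; push_cast; ring
  have hspec : spectrum ℂ Mc = {0, (r : ℂ), -(r : ℂ)} := by
    ext z
    simp only [Set.mem_insert_iff, Set.mem_singleton_iff]
    rw [spectrum.mem_iff, Matrix.isUnit_iff_isUnit_det, isUnit_iff_ne_zero, not_not,
      hdet z, hrC]
    constructor
    · intro h
      rcases mul_eq_zero.mp h with h | h
      · left; exact pow_eq_zero_iff (two_ne_zero) |>.mp h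
      · have h2 : (z - (r:ℂ)) * (z + (r:ℂ)) = 0 := by linear_combination h
        rcases mul_eq_zero.mp h2 with h3 | h3
        · right; left; exact sub_eq_zero.mp h3
        · right; right; exact eq_neg_of_add_eq_zero_left h3
    · rintro (rfl | rfl | rfl) <;> ring
  constructor
  · show (⨆ k ∈ spectrum ℂ Mc, (‖k‖₊ : ENNReal)) = _
    rw [hspec]
    have : (⨆ k ∈ ({0, (r : ℂ), -(r : ℂ)} : Set ℂ), (‖k‖₊ : ENNReal))
        = (‖(0:ℂ)‖₊ : ENNReal) ⊔ ((‖((r:ℝ):ℂ)‖₊ : ENNReal) ⊔ (‖-((r:ℝ):ℂ)‖₊ : ENNReal)) := by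
      rw [iSup_insert, iSup_insert, iSup_singleton]
    rw [this]
    simp only [nnnorm_zero, nnnorm_neg, Complex.nnnorm_real, ENNReal.coe_zero,
      bot_eq_zero, zero_le, sup_of_le_right, sup_idem]
    exact Real.enorm_eq_ofReal (Real.sqrt_nonneg _)
  · intro z hz hz0
    rw [hspec] at hz
    rcases hz with rfl | rfl | rfl
    · exact absurd rfl hz0
    · left; rfl
    · right; rfl
end

section
/- If M ≤ 0 (where M = -(c(η_A + μ_A) + μ_A μ_m + η_A(μ_m - μ_b))), then the only equilibrium of the mosquito-only subsystem (A_m, S_m) with A_m, S_m ≥ 0 is (0, 0). -/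
theorem mosquito_trivial_equilibrium_of_M_nonpos
    (μb K ηA μA μm c Am Sm : ℝ)
    (hμb : 0 < μb) (hK : 0 < K) (hηA : 0 < ηA) (hμA : 0 < μA)
    (hμm : 0 < μm) (hc : 0 ≤ c)
    (hAm : 0 ≤ Am) (hSm : 0 ≤ Sm)
    (e1 : μb * (1 - Am / K) * Sm - (ηA + μA) * Am = 0)
    (e2 : ηA * Am - (μm + c) * Sm = 0)
    (hM : -(c * (ηA + μA) + μA * μm + ηA * (μm - μb)) ≤ 0) :
    Am = 0 ∧ Sm = 0 := by
  have hKne : K ≠ 0 := ne_of_gt hK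
  have hmc : 0 < μm + c := by linarith
  have e1' : μb * (K - Am) * Sm = (ηA + μA) * Am * K := by
    field_simp at e1
    nlinarith [e1]
  have e2' : (μm + c) * Sm = ηA * Am := by linarith
  have key : μb * (K - Am) * (ηA * Am) = (ηA + μA) * Am * K * (μm + c) := by
    linear_combination (μm + c) * e1' - μb * (K - Am) * e2'
  have h' : μb * ηA ≤ (ηA + μA) * (μm + c) := by nlinarith
  have hA : Am = 0 := by
    by_contra h
    have hA0 : 0 < Am := lt_of_le_of_ne hAm (Ne.symm h)
    nlinarith [key, mul_pos (mul_pos hμb hηA) (mul_pos hA0 hA0),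
      mul_nonneg (mul_nonneg (le_of_lt hK) (le_of_lt hA0)) (sub_nonneg.mpr h')]
  refine ⟨hA, ?_⟩
  have : (μm + c) * Sm = 0 := by rw [hA] at e2; linarith
  have := mul_eq_zero.mp this
  rcases this with h | h
  · exact absurd h (ne_of_gt hmc)
  · exact h
end

section
/- If M > 0, the mosquito-only subsystem has exactly two nonnegative equilibria: (0,0) and (A_m*, S_m*) with A_m* = K M/(η_A μ_b) and S_m* = η_A A_m*/(μ_m + c), and both coordinates of the nontrivial equilibrium are strictly positive. -/
lemma mosq_aux (A S ηA μb K μm c μA : ℝ) (hK : K ≠ 0) (hmc : μm + c ≠ 0)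
    (h1 : A * (ηA * μb) = K * (ηA * μb - (ηA + μA) * (μm + c)))
    (h2 : S * (μm + c) = ηA * A) :
    μb * (1 - A / K) * S - (ηA + μA) * A = 0 := by
  have hS : S = ηA * A / (μm + c) := by field_simp; linarith [h2]
  rw [hS]
  field_simp
  linear_combination -A * h1

theorem mosquito_equilibria_of_M_pos
    (μb K ηA μA μm c : ℝ)
    (hμb : 0 < μb) (hK : 0 < K) (hηA : 0 < ηA) (hμA : 0 < μA)
    (hμm : 0 < μm) (hc : 0 ≤ c)
    (hM : 0 < -(c * (ηA + μA) + μA * μm + ηA * (μm - μb))) :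
    let M : ℝ := -(c * (ηA + μA) + μA * μm + ηA * (μm - μb))
    let Amstar : ℝ := K * M / (ηA * μb)
    let Smstar : ℝ := ηA * Amstar / (μm + c)
    0 < Amstar ∧ 0 < Smstar ∧ Amstar < K ∧
    ∀ Am Sm : ℝ, 0 ≤ Am → 0 ≤ Sm →
      ((μb * (1 - Am / K) * Sm - (ηA + μA) * Am = 0 ∧
        ηA * Am - (μm + c) * Sm = 0) ↔
        ((Am = 0 ∧ Sm = 0) ∨ (Am = Amstar ∧ Sm = Smstar))) := by
  intro M Amstar Smstar
  have hμmc : 0 < μm + c := by linarith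
  have hηb : 0 < ηA * μb := by positivity
  have hMval : M = ηA * μb - (ηA + μA) * (μm + c) := by simp only [M]; ring
  have hA : 0 < Amstar := div_pos (mul_pos hK hM) hηb
  have hS : 0 < Smstar := div_pos (mul_pos hηA hA) hμmc
  have hAeq : Amstar * (ηA * μb) = K * M := by
    simp only [Amstar]
    field_simp
  have hSeq : Smstar * (μm + c) = ηA * Amstar := by
    simp only [Smstar]
    field_simp
  have hAK : Amstar < K := by
    rw [div_lt_iff₀ hηb]
    have : M < ηA * μb := by rw [hMval]; nlinarith
    nlinarith
  refine ⟨hA, hS, hAK, ?_⟩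
  intro Am Sm hAm hSm
  constructor
  · rintro ⟨h1, h2⟩
    have hSm' : Sm = ηA * Am / (μm + c) := by
      field_simp
      linarith
    rcases eq_or_lt_of_le hAm with h0 | hpos
    · left
      refine ⟨h0.symm, ?_⟩
      rw [hSm', ← h0]; simp
    · right
      rw [hSm'] at h1
      have key : Am * (ηA * μb) = K * M := by
        rw [hMval]
        have h1' := h1
        field_simp at h1'
        have hz : Am * (μb * (K - Am) * ηA - (ηA + μA) * (μm + c) * K) = 0 := by
          nlinarith [h1']
        rcases mul_eq_zero.mp hz with h | h
        · exact absurd h (ne_of_gt hpos)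
        · nlinarith [h]
      have hAmv : Am = Amstar :=
        mul_right_cancel₀ (ne_of_gt hηb) (key.trans hAeq.symm)
      exact ⟨hAmv, by rw [hSm', hAmv]⟩
  · rintro (⟨h1, h2⟩ | ⟨h1, h2⟩) <;> subst h1 <;> subst h2
    · norm_num
    · refine ⟨?_, ?_⟩
      · exact mosq_aux Amstar Smstar ηA μb K μm c μA (ne_of_gt hK) (ne_of_gt hμmc)
          (by rw [hAeq, hMval]) hSeq
      · linarith [hSeq]
end

section
/- The region Ω = {(S_h, E_h, I_h, A_m, S_m, E_m, I_m) ∈ ℝ₊⁷ : S_h + E_h + I_h ≤ N_h, A_m ≤ k N_h, S_m + E_m + I_m ≤ m N_h} is positively invariant for the dengue ODE system, provided μ_b m ≤ (η_A + μ_A) k and η_A k ≤ (μ_m + c) m. -/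
open Set Filter Topology

private lemma left_nonneg' {h : ℝ → ℝ} {τ : ℝ} (hc : ContinuousAt h τ) (hτ : 0 < τ)
    (hp : ∀ t, 0 ≤ t → t < τ → 0 ≤ h t) : 0 ≤ h τ := by
  have ht : Tendsto h (𝓝[Set.Iio τ] τ) (𝓝 (h τ)) := hc.continuousWithinAt
  refine ge_of_tendsto ht ?_
  have hmem : Set.Ioo 0 τ ∈ 𝓝[Set.Iio τ] τ := by
    rw [← Set.Ioi_inter_Iio]
    exact inter_mem (mem_nhdsWithin_of_mem_nhds (Ioi_mem_nhds hτ)) self_mem_nhdsWithin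
  filter_upwards [hmem] with t ht'
  exact hp t ht'.1.le ht'.2

private lemma deriv_nonpos_left' {h : ℝ → ℝ} {τ d : ℝ} (hτ : 0 < τ)
    (hd : HasDerivAt h d τ) (h0 : h τ = 0)
    (hp : ∀ t, 0 ≤ t → t < τ → 0 ≤ h t) : d ≤ 0 := by
  have hdw : HasDerivWithinAt h d (Set.Iio τ) τ := hd.hasDerivWithinAt
  rw [hasDerivWithinAt_iff_tendsto_slope] at hdw
  have hss : Set.Iio τ \ {τ} = Set.Iio τ := by
    ext x
    simp only [Set.mem_diff, Set.mem_Iio, Set.mem_singleton_iff]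
    exact ⟨fun h => h.1, fun h => ⟨h, ne_of_lt h⟩⟩
  rw [hss] at hdw
  refine le_of_tendsto hdw ?_
  have hmem : Set.Ioo 0 τ ∈ 𝓝[Set.Iio τ] τ := by
    rw [← Set.Ioi_inter_Iio]
    exact inter_mem (mem_nhdsWithin_of_mem_nhds (Ioi_mem_nhds hτ)) self_mem_nhdsWithin
  filter_upwards [hmem] with t ht'
  have hslope : slope h τ t = h t / (t - τ) := by
    rw [slope_def_field, h0, sub_zero]
  rw [hslope]
  exact div_nonpos_of_nonneg_of_nonpos (hp t ht'.1.le ht'.2) (by linarith [ht'.2])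

private lemma eps_limit' {x C b : ℝ} (hC : 0 < C) (hb : 0 < b)
    (h : ∀ ε : ℝ, 0 < ε → ε ≤ b → 0 < x + ε * C) : 0 ≤ x := by
  by_contra hx
  push_neg at hx
  have h1 : 0 < min b (-x / (2 * C)) := lt_min hb (div_pos (by linarith) (by linarith))
  have h2 := h _ h1 (min_le_left _ _)
  have h3 : min b (-x / (2 * C)) * C ≤ (-x / (2 * C)) * C :=
    mul_le_mul_of_nonneg_right (min_le_right _ _) hC.le
  have h4 : (-x / (2 * C)) * C = -x / 2 := by field_simp
  linarith



private lemma branch1 (μh B βmh Nh v L E Imτ : ℝ) (hμh : 0 < μh) (hNh : 0 < Nh)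
    (nnE : 0 ≤ B * βmh * v) (n7 : 0 ≤ Imτ + E) (hE : 0 < E) (hE1 : E ≤ 1)
    (hLa : B * βmh * v ≤ L)
    (hle : μh * Nh + B * βmh * v * Imτ * E + μh * E + L * E ≤ 0) : False := by
  nlinarith [mul_pos hμh hNh, mul_nonneg (mul_nonneg nnE hE.le) n7,
    mul_nonneg nnE (mul_nonneg hE.le (by linarith : (0:ℝ) ≤ 1 - E)),
    mul_nonneg hE.le (by linarith : (0:ℝ) ≤ L - B * βmh * v), mul_pos hμh hE]

private lemma branch2 (B βmh νh μh v L E M Imτ Shτ : ℝ)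
    (nnE : 0 ≤ B * βmh * v) (n7 : 0 ≤ Imτ + E) (n1 : 0 ≤ Shτ + E)
    (hImM : Imτ ≤ M) (hShM : Shτ ≤ M) (hE : 0 < E) (hE1 : E ≤ 1) (hM1 : 1 ≤ M)
    (hνμ : 0 < νh + μh) (hLb : 3 * B * βmh * M * v + 1 ≤ L)
    (hle : B * βmh * v * Imτ * Shτ + (νh + μh) * E + L * E ≤ 0) : False := by
  nlinarith [mul_nonneg nnE (mul_nonneg n7 n1),
    mul_nonneg (mul_nonneg nnE hE.le) (sub_nonneg.mpr hImM),
    mul_nonneg (mul_nonneg nnE hE.le) (sub_nonneg.mpr hShM),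
    mul_nonneg (mul_nonneg nnE hE.le) (by linarith : (0:ℝ) ≤ M - E),
    mul_nonneg hE.le (by linarith : (0:ℝ) ≤ L - (3 * B * βmh * M * v + 1)),
    mul_pos hνμ hE]

private lemma branch3 (νh ηh μh L E Ehτ : ℝ) (hνh : 0 < νh) (n2 : 0 ≤ Ehτ + E)
    (hE : 0 < E) (hLc : νh + 1 ≤ L) (hηhμh : 0 < ηh + μh)
    (hle : νh * Ehτ + (ηh + μh) * E + L * E ≤ 0) : False := by
  nlinarith [mul_nonneg hνh.le n2, mul_nonneg hE.le (by linarith : (0:ℝ) ≤ L - (νh + 1)),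
    mul_pos hηhμh hE]

private lemma branch4 (μb ηA μA u L E S3 : ℝ) (hμb : 0 < μb) (hu : 0 < u)
    (hE : 0 < E) (hE1 : E ≤ 1) (hS3 : 0 ≤ S3 + 3 * E) (hηAμA : 0 < ηA + μA)
    (hLd : 3 * μb * (1 + u) + 1 ≤ L)
    (hle : μb * (1 + E * u) * S3 + (ηA + μA) * E + L * E ≤ 0) : False := by
  nlinarith [mul_nonneg (mul_nonneg hμb.le
      (by nlinarith [mul_nonneg hE.le hu.le] : (0:ℝ) ≤ 1 + E * u)) hS3,
    mul_nonneg (mul_nonneg (mul_nonneg hμb.le hu.le) hE.le) (by linarith : (0:ℝ) ≤ 1 - E),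
    mul_nonneg hE.le (by linarith : (0:ℝ) ≤ L - (3 * μb * (1 + u) + 1)),
    mul_pos hηAμA hE]

private lemma branch5 (B βhm μm c ηA v L E Ihτ Amτ : ℝ) (nnD : 0 ≤ B * βhm * v)
    (n3 : 0 ≤ Ihτ + E) (n4 : 0 ≤ Amτ + E) (hE : 0 < E) (hE1 : E ≤ 1)
    (hμm : 0 < μm) (hc : 0 ≤ c) (hηA : 0 < ηA) (hLe : B * βhm * v + ηA + 1 ≤ L)
    (hle : B * βhm * v * Ihτ * E + μm * E + c * E + ηA * Amτ + L * E ≤ 0) : False := by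
  nlinarith [mul_nonneg (mul_nonneg nnD hE.le) n3,
    mul_nonneg nnD (mul_nonneg hE.le (by linarith : (0:ℝ) ≤ 1 - E)),
    mul_nonneg hηA.le n4,
    mul_nonneg hE.le (by linarith : (0:ℝ) ≤ L - (B * βhm * v + ηA + 1)),
    mul_pos hμm hE, mul_nonneg hc hE.le]

private lemma branch6 (B βhm μm ηm c v L E M Ihτ Smτ : ℝ)
    (nnD : 0 ≤ B * βhm * v) (n3 : 0 ≤ Ihτ + E) (n5 : 0 ≤ Smτ + E)
    (hIhM : Ihτ ≤ M) (hSmM : Smτ ≤ M) (hE : 0 < E) (hE1 : E ≤ 1) (hM1 : 1 ≤ M)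
    (hμη : 0 < μm + ηm) (hc : 0 ≤ c) (hLf : 3 * B * βhm * M * v + 1 ≤ L)
    (hle : B * βhm * v * Ihτ * Smτ + (μm + ηm) * E + c * E + L * E ≤ 0) : False := by
  nlinarith [mul_nonneg nnD (mul_nonneg n3 n5),
    mul_nonneg (mul_nonneg nnD hE.le) (sub_nonneg.mpr hIhM),
    mul_nonneg (mul_nonneg nnD hE.le) (sub_nonneg.mpr hSmM),
    mul_nonneg (mul_nonneg nnD hE.le) (by linarith : (0:ℝ) ≤ M - E),
    mul_nonneg hE.le (by linarith : (0:ℝ) ≤ L - (3 * B * βhm * M * v + 1)),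
    mul_pos hμη hE, mul_nonneg hc hE.le]

private lemma branch7 (ηm μm c L E Emτ : ℝ) (hηm : 0 < ηm) (n6 : 0 ≤ Emτ + E)
    (hE : 0 < E) (hμm : 0 < μm) (hc : 0 ≤ c) (hLg : ηm + 1 ≤ L)
    (hle : ηm * Emτ + μm * E + c * E + L * E ≤ 0) : False := by
  nlinarith [mul_nonneg hηm.le n6, mul_nonneg hE.le (by linarith : (0:ℝ) ≤ L - (ηm + 1)),
    mul_pos hμm hE, mul_nonneg hc hE.le]

private lemma branch8 (μh ηh L E Ihτ : ℝ) (hμh : 0 < μh) (hηh : 0 < ηh)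
    (n3 : 0 ≤ Ihτ + E) (hE : 0 < E) (hLb' : ηh + 1 ≤ L)
    (hle : μh * E + ηh * Ihτ + L * E ≤ 0) : False := by
  nlinarith [mul_nonneg hηh.le n3, mul_nonneg hE.le (by linarith : (0:ℝ) ≤ L - (ηh + 1)),
    mul_pos hμh hE]

private lemma branch9 (μb ηA μA u L E S3 kNh : ℝ) (hμb : 0 < μb) (hu : 0 < u)
    (hE : 0 < E) (hE1 : E ≤ 1) (hS3 : 0 ≤ S3 + 3 * E) (hkNh : 0 < kNh)
    (hηAμA : 0 < ηA + μA) (hLd : 3 * μb * (1 + u) + 1 ≤ L)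
    (hle : μb * (E * u) * S3 + (ηA + μA) * (kNh + E) + L * E ≤ 0) : False := by
  nlinarith [mul_nonneg (mul_nonneg (mul_nonneg hμb.le hu.le) hE.le) hS3,
    mul_nonneg (mul_nonneg (mul_nonneg hμb.le hu.le) hE.le) (by linarith : (0:ℝ) ≤ 1 - E),
    mul_nonneg hE.le (by linarith : (0:ℝ) ≤ L - (3 * μb * (1 + u) + 1)),
    mul_pos hηAμA hkNh, mul_pos hηAμA hE]

private lemma branch10 (ηA μm c L E kNh mNh Amτ : ℝ) (hηA : 0 < ηA)
    (hAmU : Amτ ≤ kNh + E) (hE : 0 < E) (hpar : ηA * kNh ≤ (μm + c) * mNh)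
    (hmc : 0 ≤ μm + c) (hLh : ηA + 1 ≤ L)
    (hle : -(ηA * Amτ) + (μm + c) * (mNh + E) + L * E ≤ 0) : False := by
  nlinarith [mul_nonneg hηA.le (by linarith : (0:ℝ) ≤ kNh + E - Amτ), hpar,
    mul_nonneg hE.le (by linarith : (0:ℝ) ≤ L - (ηA + 1)), mul_nonneg hmc hE.le]

set_option maxHeartbeats 1000000 in
theorem omega_positively_invariant
    (μh B βmh βhm νh ηh μb k m ηA μA μm ηm c Nh : ℝ)
    (Sh Eh Ih Rh Am Sm Em Im : ℝ → ℝ)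
    (hμh : 0 < μh) (hB : 0 < B) (hβmh : 0 < βmh) (hβhm : 0 < βhm)
    (hνh : 0 < νh) (hηh : 0 < ηh) (hμb : 0 < μb) (hk : 0 < k) (hm : 0 < m)
    (hηA : 0 < ηA) (hμA : 0 < μA) (hμm : 0 < μm) (hηm : 0 < ηm)
    (hc : 0 ≤ c) (hNh : 0 < Nh)
    (hpar1 : μb * m ≤ (ηA + μA) * k)
    (hpar2 : ηA * k ≤ (μm + c) * m)
    (hSh : ∀ t, HasDerivAt Sh (μh * Nh - (B * βmh * Im t / Nh + μh) * Sh t) t)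
    (hEh : ∀ t, HasDerivAt Eh (B * βmh * (Im t / Nh) * Sh t - (νh + μh) * Eh t) t)
    (hIh : ∀ t, HasDerivAt Ih (νh * Eh t - (ηh + μh) * Ih t) t)
    (hAm : ∀ t, HasDerivAt Am
      (μb * (1 - Am t / (k * Nh)) * (Sm t + Em t + Im t) - (ηA + μA) * Am t) t)
    (hSm : ∀ t, HasDerivAt Sm
      (-(B * βhm * Ih t / Nh + μm) * Sm t + ηA * Am t - c * Sm t) t)
    (hEm : ∀ t, HasDerivAt Em
      (B * βhm * (Ih t / Nh) * Sm t - (μm + ηm) * Em t - c * Em t) t)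
    (hIm : ∀ t, HasDerivAt Im (ηm * Em t - μm * Im t - c * Im t) t)
    (hΩ0 : 0 ≤ Sh 0 ∧ 0 ≤ Eh 0 ∧ 0 ≤ Ih 0 ∧ 0 ≤ Am 0 ∧ 0 ≤ Sm 0 ∧ 0 ≤ Em 0 ∧ 0 ≤ Im 0 ∧
      Sh 0 + Eh 0 + Ih 0 ≤ Nh ∧ Am 0 ≤ k * Nh ∧ Sm 0 + Em 0 + Im 0 ≤ m * Nh) :
    ∀ t : ℝ, 0 ≤ t →
      0 ≤ Sh t ∧ 0 ≤ Eh t ∧ 0 ≤ Ih t ∧ 0 ≤ Am t ∧ 0 ≤ Sm t ∧ 0 ≤ Em t ∧ 0 ≤ Im t ∧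
      Sh t + Eh t + Ih t ≤ Nh ∧ Am t ≤ k * Nh ∧ Sm t + Em t + Im t ≤ m * Nh := by
  intro t0 ht0
  obtain ⟨i1, i2, i3, i4, i5, i6, i7, i8, i9, i10⟩ := hΩ0
  have dSh : Differentiable ℝ Sh := fun t => (hSh t).differentiableAt
  have dEh : Differentiable ℝ Eh := fun t => (hEh t).differentiableAt
  have dIh : Differentiable ℝ Ih := fun t => (hIh t).differentiableAt
  have dAm : Differentiable ℝ Am := fun t => (hAm t).differentiableAt
  have dSm : Differentiable ℝ Sm := fun t => (hSm t).differentiableAt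
  have dEm : Differentiable ℝ Em := fun t => (hEm t).differentiableAt
  have dIm : Differentiable ℝ Im := fun t => (hIm t).differentiableAt
  obtain ⟨v, hvdef⟩ : ∃ x : ℝ, x = Nh⁻¹ := ⟨_, rfl⟩
  obtain ⟨u, hudef⟩ : ∃ x : ℝ, x = (k * Nh)⁻¹ := ⟨_, rfl⟩
  have hv : 0 < v := by rw [hvdef]; positivity
  have hu : 0 < u := by rw [hudef]; positivity
  have hku : k * Nh * u = 1 := by
    rw [hudef]; exact mul_inv_cancel₀ (ne_of_gt (mul_pos hk hNh))
  obtain ⟨M, hMdef⟩ : ∃ x : ℝ, x = Nh + m * Nh + 3 := ⟨_, rfl⟩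
  have hmNh : 0 < m * Nh := mul_pos hm hNh
  have hMpos : 0 < M := by rw [hMdef]; linarith only [hmNh, hNh]
  have hM1 : 1 ≤ M := by rw [hMdef]; linarith only [hmNh, hNh]
  obtain ⟨L, hLdef⟩ : ∃ x : ℝ, x = 1 + νh + ηh + μh + ηm + ηA + 3 * μb * (1 + u)
      + 3 * B * βmh * M * v + 3 * B * βhm * M * v + B * βhm * v + B * βmh * v := ⟨_, rfl⟩
  have nnA : 0 ≤ 3 * μb * (1 + u) := by linarith only [mul_pos hμb hu, hμb]
  have nnB : 0 ≤ 3 * B * βmh * M * v := by linarith only [mul_pos (mul_pos (mul_pos hB hβmh) hMpos) hv]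
  have nnC : 0 ≤ 3 * B * βhm * M * v := by linarith only [mul_pos (mul_pos (mul_pos hB hβhm) hMpos) hv]
  have nnD : 0 ≤ B * βhm * v := by linarith only [mul_pos (mul_pos hB hβhm) hv]
  have nnE : 0 ≤ B * βmh * v := by linarith only [mul_pos (mul_pos hB hβmh) hv]
  have hL0 : 0 ≤ L := by rw [hLdef]; linarith only [nnA, nnB, nnC, nnD, nnE, hνh, hηh, hμh, hηm, hηA]
  have hLa : B * βmh * v ≤ L := by
    rw [hLdef]; linarith only [nnA, nnB, nnC, nnD, nnE, hνh, hηh, hμh, hηm, hηA]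
  have hLb : 3 * B * βmh * M * v + 1 ≤ L := by
    rw [hLdef]; linarith only [nnA, nnB, nnC, nnD, nnE, hνh, hηh, hμh, hηm, hηA]
  have hLb' : ηh + 1 ≤ L := by
    rw [hLdef]; linarith only [nnA, nnB, nnC, nnD, nnE, hνh, hηh, hμh, hηm, hηA]
  have hLc : νh + 1 ≤ L := by
    rw [hLdef]; linarith only [nnA, nnB, nnC, nnD, nnE, hνh, hηh, hμh, hηm, hηA]
  have hLd : 3 * μb * (1 + u) + 1 ≤ L := by
    rw [hLdef]; linarith only [nnA, nnB, nnC, nnD, nnE, hνh, hηh, hμh, hηm, hηA]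
  have hLe : B * βhm * v + ηA + 1 ≤ L := by
    rw [hLdef]; linarith only [nnA, nnB, nnC, nnD, nnE, hνh, hηh, hμh, hηm, hηA]
  have hLf : 3 * B * βhm * M * v + 1 ≤ L := by
    rw [hLdef]; linarith only [nnA, nnB, nnC, nnD, nnE, hνh, hηh, hμh, hηm, hηA]
  have hLg : ηm + 1 ≤ L := by
    rw [hLdef]; linarith only [nnA, nnB, nnC, nnD, nnE, hνh, hηh, hμh, hηm, hηA]
  have hLh : ηA + 1 ≤ L := by
    rw [hLdef]; linarith only [nnA, nnB, nnC, nnD, nnE, hνh, hηh, hμh, hηm, hηA]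
  have key : ∀ ε : ℝ, 0 < ε → ε ≤ Real.exp (-(L * t0)) → ∀ s, 0 ≤ s → s ≤ t0 →
      0 < Sh s + ε * Real.exp (L * s) ∧
      0 < Eh s + ε * Real.exp (L * s) ∧
      0 < Ih s + ε * Real.exp (L * s) ∧
      0 < Am s + ε * Real.exp (L * s) ∧
      0 < Sm s + ε * Real.exp (L * s) ∧
      0 < Em s + ε * Real.exp (L * s) ∧
      0 < Im s + ε * Real.exp (L * s) ∧
      0 < Nh - (Sh s + Eh s + Ih s) + ε * Real.exp (L * s) ∧
      0 < k * Nh - Am s + ε * Real.exp (L * s) ∧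
      0 < m * Nh - (Sm s + Em s + Im s) + ε * Real.exp (L * s) := by
    intro ε hε hεb
    have cE : Continuous (fun t : ℝ => ε * Real.exp (L * t)) := by fun_prop
    obtain ⟨g, hgdef⟩ : ∃ g : ℝ → ℝ, g = fun t =>
      min (Sh t + ε * Real.exp (L * t))
      (min (Eh t + ε * Real.exp (L * t))
      (min (Ih t + ε * Real.exp (L * t))
      (min (Am t + ε * Real.exp (L * t))
      (min (Sm t + ε * Real.exp (L * t))
      (min (Em t + ε * Real.exp (L * t))
      (min (Im t + ε * Real.exp (L * t))
      (min (Nh - (Sh t + Eh t + Ih t) + ε * Real.exp (L * t))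
      (min (k * Nh - Am t + ε * Real.exp (L * t))
           (m * Nh - (Sm t + Em t + Im t) + ε * Real.exp (L * t)))))))))) := ⟨_, rfl⟩
    suffices hsuf : ∀ s, 0 ≤ s → s ≤ t0 → 0 < g s by
      intro s h1 h2
      have h := hsuf s h1 h2
      simp only [hgdef, lt_min_iff] at h
      exact ⟨h.1, h.2.1, h.2.2.1, h.2.2.2.1, h.2.2.2.2.1, h.2.2.2.2.2.1, h.2.2.2.2.2.2.1,
        h.2.2.2.2.2.2.2.1, h.2.2.2.2.2.2.2.2.1, h.2.2.2.2.2.2.2.2.2⟩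
    have cg : Continuous g := by
      have c1 := dSh.continuous; have c2 := dEh.continuous; have c3 := dIh.continuous
      have c4 := dAm.continuous; have c5 := dSm.continuous; have c6 := dEm.continuous
      have c7 := dIm.continuous
      rw [hgdef]
      fun_prop
    by_contra hbad
    push_neg at hbad
    obtain ⟨s₀, hs₀, hs₀t, hgs₀⟩ := hbad
    obtain ⟨Bad, hBdef⟩ : ∃ s : Set ℝ, s = Set.Icc 0 t0 ∩ g ⁻¹' Set.Iic 0 := ⟨_, rfl⟩
    have hBc : IsClosed Bad := by rw [hBdef]; exact isClosed_Icc.inter (isClosed_Iic.preimage cg)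
    have hBne : Bad.Nonempty := by rw [hBdef]; exact ⟨s₀, ⟨⟨hs₀, hs₀t⟩, hgs₀⟩⟩
    have hBbdd : BddBelow Bad := by rw [hBdef]; exact ⟨0, fun x hx => hx.1.1⟩
    obtain ⟨τ, hτdef⟩ : ∃ x : ℝ, x = sInf Bad := ⟨_, rfl⟩
    have hτmem : τ ∈ Bad := by rw [hτdef]; exact hBc.csInf_mem hBne hBbdd
    rw [hBdef] at hτmem
    obtain ⟨⟨hτ0, hτle⟩, hgτ⟩ := hτmem
    have hgτ' : g τ ≤ 0 := hgτ
    have hg0 : 0 < g 0 := by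
      rw [hgdef]
      simp only [mul_zero, Real.exp_zero, mul_one]
      refine lt_min (by linarith only [i1, hε]) (lt_min (by linarith only [i2, hε])
        (lt_min (by linarith only [i3, hε])
        (lt_min (by linarith only [i4, hε]) (lt_min (by linarith only [i5, hε])
        (lt_min (by linarith only [i6, hε])
        (lt_min (by linarith only [i7, hε]) (lt_min (by linarith only [i8, hε])
        (lt_min (by linarith only [i9, hε]) (by linarith only [i10, hε])))))))))
    have hτpos : 0 < τ := by
      rcases hτ0.eq_or_lt with h | h
      · exfalso
        have hgτ2 : g τ ≤ 0 := hgτ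
        rw [← h] at hgτ2
        linarith only [hg0, hgτ2]
      · exact h
    have hpre : ∀ t, 0 ≤ t → t < τ → 0 < g t := by
      intro t h1 h2
      by_contra h
      push_neg at h
      have hmem : t ∈ Bad := by rw [hBdef]; exact ⟨⟨h1, le_trans h2.le hτle⟩, h⟩
      have := csInf_le hBbdd hmem
      rw [← hτdef] at this
      exact absurd this (not_le.mpr h2)
    have hsplit : ∀ t, 0 ≤ t → t < τ →
        0 < Sh t + ε * Real.exp (L * t) ∧
        0 < Eh t + ε * Real.exp (L * t) ∧
        0 < Ih t + ε * Real.exp (L * t) ∧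
        0 < Am t + ε * Real.exp (L * t) ∧
        0 < Sm t + ε * Real.exp (L * t) ∧
        0 < Em t + ε * Real.exp (L * t) ∧
        0 < Im t + ε * Real.exp (L * t) ∧
        0 < Nh - (Sh t + Eh t + Ih t) + ε * Real.exp (L * t) ∧
        0 < k * Nh - Am t + ε * Real.exp (L * t) ∧
        0 < m * Nh - (Sm t + Em t + Im t) + ε * Real.exp (L * t) := by
      intro t h1 h2
      have h := hpre t h1 h2
      simp only [hgdef, lt_min_iff] at h
      exact ⟨h.1, h.2.1, h.2.2.1, h.2.2.2.1, h.2.2.2.2.1, h.2.2.2.2.2.1, h.2.2.2.2.2.2.1,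
        h.2.2.2.2.2.2.2.1, h.2.2.2.2.2.2.2.2.1, h.2.2.2.2.2.2.2.2.2⟩
    obtain ⟨E, hEdef⟩ : ∃ E : ℝ, E = ε * Real.exp (L * τ) := ⟨_, rfl⟩
    have hEpos : 0 < E := by rw [hEdef]; positivity
    have hE1 : E ≤ 1 := by
      rw [hEdef]
      calc ε * Real.exp (L * τ) ≤ Real.exp (-(L * t0)) * Real.exp (L * τ) :=
            mul_le_mul_of_nonneg_right hεb (Real.exp_pos _).le
        _ = Real.exp (-(L * t0) + L * τ) := (Real.exp_add _ _).symm
        _ ≤ Real.exp 0 := Real.exp_le_exp.mpr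
            (by linarith only [mul_le_mul_of_nonneg_left hτle hL0])
        _ = 1 := Real.exp_zero
    have n1 : 0 ≤ Sh τ + E := by
      rw [hEdef]
      exact left_nonneg' (h := fun t => Sh t + ε * Real.exp (L * t)) ((dSh.continuous.add cE).continuousAt) hτpos
        (fun t a b => (hsplit t a b).1.le)
    have n2 : 0 ≤ Eh τ + E := by
      rw [hEdef]
      exact left_nonneg' (h := fun t => Eh t + ε * Real.exp (L * t)) ((dEh.continuous.add cE).continuousAt) hτpos
        (fun t a b => (hsplit t a b).2.1.le)
    have n3 : 0 ≤ Ih τ + E := by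
      rw [hEdef]
      exact left_nonneg' (h := fun t => Ih t + ε * Real.exp (L * t)) ((dIh.continuous.add cE).continuousAt) hτpos
        (fun t a b => (hsplit t a b).2.2.1.le)
    have n4 : 0 ≤ Am τ + E := by
      rw [hEdef]
      exact left_nonneg' (h := fun t => Am t + ε * Real.exp (L * t)) ((dAm.continuous.add cE).continuousAt) hτpos
        (fun t a b => (hsplit t a b).2.2.2.1.le)
    have n5 : 0 ≤ Sm τ + E := by
      rw [hEdef]
      exact left_nonneg' (h := fun t => Sm t + ε * Real.exp (L * t)) ((dSm.continuous.add cE).continuousAt) hτpos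
        (fun t a b => (hsplit t a b).2.2.2.2.1.le)
    have n6 : 0 ≤ Em τ + E := by
      rw [hEdef]
      exact left_nonneg' (h := fun t => Em t + ε * Real.exp (L * t)) ((dEm.continuous.add cE).continuousAt) hτpos
        (fun t a b => (hsplit t a b).2.2.2.2.2.1.le)
    have n7 : 0 ≤ Im τ + E := by
      rw [hEdef]
      exact left_nonneg' (h := fun t => Im t + ε * Real.exp (L * t)) ((dIm.continuous.add cE).continuousAt) hτpos
        (fun t a b => (hsplit t a b).2.2.2.2.2.2.1.le)
    have n8 : 0 ≤ Nh - (Sh τ + Eh τ + Ih τ) + E := by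
      rw [hEdef]
      exact left_nonneg' (h := fun t => Nh - (Sh t + Eh t + Ih t) + ε * Real.exp (L * t)) (((continuous_const.sub
        ((dSh.continuous.add dEh.continuous).add dIh.continuous)).add cE).continuousAt) hτpos
        (fun t a b => (hsplit t a b).2.2.2.2.2.2.2.1.le)
    have n9 : 0 ≤ k * Nh - Am τ + E := by
      rw [hEdef]
      exact left_nonneg' (h := fun t => k * Nh - Am t + ε * Real.exp (L * t)) (((continuous_const.sub dAm.continuous).add cE).continuousAt) hτpos
        (fun t a b => (hsplit t a b).2.2.2.2.2.2.2.2.1.le)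
    have n10 : 0 ≤ m * Nh - (Sm τ + Em τ + Im τ) + E := by
      rw [hEdef]
      exact left_nonneg' (h := fun t => m * Nh - (Sm t + Em t + Im t) + ε * Real.exp (L * t)) (((continuous_const.sub
        ((dSm.continuous.add dEm.continuous).add dIm.continuous)).add cE).continuousAt) hτpos
        (fun t a b => (hsplit t a b).2.2.2.2.2.2.2.2.2.le)
    have hShM : Sh τ ≤ M := by rw [hMdef]; linarith only [n8, n2, n3, hE1, hmNh]
    have hIhM : Ih τ ≤ M := by rw [hMdef]; linarith only [n8, n1, n2, hE1, hmNh]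
    have hImM : Im τ ≤ M := by rw [hMdef]; linarith only [n10, n5, n6, hE1, hNh]
    have hSmM : Sm τ ≤ M := by rw [hMdef]; linarith only [n10, n6, n7, hE1, hNh]
    have hδd : HasDerivAt (fun t => ε * Real.exp (L * t)) (L * (ε * Real.exp (L * τ))) τ := by
      have h1 : HasDerivAt (fun t : ℝ => L * t) L τ := by simpa using (hasDerivAt_id τ).const_mul L
      have h2 := (h1.exp).const_mul ε
      refine h2.congr_deriv ?_
      ring
    simp only [hgdef, min_le_iff] at hgτ'
    rcases hgτ' with hcs | hcs | hcs | hcs | hcs | hcs | hcs | hcs | hcs | hcs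
    · -- Sh hits -E
      have h0 : Sh τ + ε * Real.exp (L * τ) = 0 := le_antisymm hcs (hEdef ▸ n1)
      have heq : Sh τ = -E := by rw [hEdef]; linarith only [h0]
      have hd : HasDerivAt (fun t => Sh t + ε * Real.exp (L * t))
          (μh * Nh - (B * βmh * (Im τ * v) + μh) * Sh τ + L * E) τ := by
        have h := (hSh τ).add hδd
        refine h.congr_deriv ?_
        rw [hEdef, hvdef, div_eq_mul_inv]
        try ring
      have hle := deriv_nonpos_left' hτpos hd h0 (fun t a b => (hsplit t a b).1.le)
      rw [heq] at hle
      exact branch1 μh B βmh Nh v L E (Im τ) hμh hNh nnE n7 hEpos hE1 hLa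
        (by linarith only [hle])
    · -- Eh hits -E
      have h0 : Eh τ + ε * Real.exp (L * τ) = 0 := le_antisymm hcs (hEdef ▸ n2)
      have heq : Eh τ = -E := by rw [hEdef]; linarith only [h0]
      have hd : HasDerivAt (fun t => Eh t + ε * Real.exp (L * t))
          (B * βmh * (Im τ * v) * Sh τ - (νh + μh) * Eh τ + L * E) τ := by
        have h := (hEh τ).add hδd
        refine h.congr_deriv ?_
        rw [hEdef, hvdef, div_eq_mul_inv]
        try ring
      have hle := deriv_nonpos_left' hτpos hd h0 (fun t a b => (hsplit t a b).2.1.le)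
      rw [heq] at hle
      exact branch2 B βmh νh μh v L E M (Im τ) (Sh τ) nnE n7 n1 hImM hShM hEpos hE1 hM1
        (by linarith only [hνh, hμh]) hLb (by linarith only [hle])
    · -- Ih hits -E
      have h0 : Ih τ + ε * Real.exp (L * τ) = 0 := le_antisymm hcs (hEdef ▸ n3)
      have heq : Ih τ = -E := by rw [hEdef]; linarith only [h0]
      have hd : HasDerivAt (fun t => Ih t + ε * Real.exp (L * t))
          (νh * Eh τ - (ηh + μh) * Ih τ + L * E) τ := by
        have h := (hIh τ).add hδd
        refine h.congr_deriv ?_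
        rw [hEdef]
      have hle := deriv_nonpos_left' hτpos hd h0 (fun t a b => (hsplit t a b).2.2.1.le)
      rw [heq] at hle
      exact branch3 νh ηh μh L E (Eh τ) hνh n2 hEpos hLc (by linarith only [hηh, hμh]) (by linarith only [hle])
    · -- Am hits -E
      have h0 : Am τ + ε * Real.exp (L * τ) = 0 := le_antisymm hcs (hEdef ▸ n4)
      have heq : Am τ = -E := by rw [hEdef]; linarith only [h0]
      have hd : HasDerivAt (fun t => Am t + ε * Real.exp (L * t))
          (μb * (1 - Am τ * u) * (Sm τ + Em τ + Im τ) - (ηA + μA) * Am τ + L * E) τ := by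
        have h := (hAm τ).add hδd
        refine h.congr_deriv ?_
        rw [hEdef, hudef, div_eq_mul_inv]
        try ring
      have hle := deriv_nonpos_left' hτpos hd h0 (fun t a b => (hsplit t a b).2.2.2.1.le)
      rw [heq] at hle
      exact branch4 μb ηA μA u L E (Sm τ + Em τ + Im τ) hμb hu hEpos hE1
        (by linarith only [n5, n6, n7]) (by linarith only [hηA, hμA]) hLd
        (by linarith only [hle])
    · -- Sm hits -E
      have h0 : Sm τ + ε * Real.exp (L * τ) = 0 := le_antisymm hcs (hEdef ▸ n5)
      have heq : Sm τ = -E := by rw [hEdef]; linarith only [h0]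
      have hd : HasDerivAt (fun t => Sm t + ε * Real.exp (L * t))
          (-(B * βhm * (Ih τ * v) + μm) * Sm τ + ηA * Am τ - c * Sm τ + L * E) τ := by
        have h := (hSm τ).add hδd
        refine h.congr_deriv ?_
        rw [hEdef, hvdef, div_eq_mul_inv]
        try ring
      have hle := deriv_nonpos_left' hτpos hd h0 (fun t a b => (hsplit t a b).2.2.2.2.1.le)
      rw [heq] at hle
      exact branch5 B βhm μm c ηA v L E (Ih τ) (Am τ) nnD n3 n4 hEpos hE1 hμm hc hηA hLe
        (by linarith only [hle])
    · -- Em hits -E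
      have h0 : Em τ + ε * Real.exp (L * τ) = 0 := le_antisymm hcs (hEdef ▸ n6)
      have heq : Em τ = -E := by rw [hEdef]; linarith only [h0]
      have hd : HasDerivAt (fun t => Em t + ε * Real.exp (L * t))
          (B * βhm * (Ih τ * v) * Sm τ - (μm + ηm) * Em τ - c * Em τ + L * E) τ := by
        have h := (hEm τ).add hδd
        refine h.congr_deriv ?_
        rw [hEdef, hvdef, div_eq_mul_inv]
        try ring
      have hle := deriv_nonpos_left' hτpos hd h0 (fun t a b => (hsplit t a b).2.2.2.2.2.1.le)
      rw [heq] at hle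
      exact branch6 B βhm μm ηm c v L E M (Ih τ) (Sm τ) nnD n3 n5 hIhM hSmM hEpos hE1 hM1
        (by linarith only [hμm, hηm]) hc hLf (by linarith only [hle])
    · -- Im hits -E
      have h0 : Im τ + ε * Real.exp (L * τ) = 0 := le_antisymm hcs (hEdef ▸ n7)
      have heq : Im τ = -E := by rw [hEdef]; linarith only [h0]
      have hd : HasDerivAt (fun t => Im t + ε * Real.exp (L * t))
          (ηm * Em τ - μm * Im τ - c * Im τ + L * E) τ := by
        have h := (hIm τ).add hδd
        refine h.congr_deriv ?_
        rw [hEdef]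
      have hle := deriv_nonpos_left' hτpos hd h0 (fun t a b => (hsplit t a b).2.2.2.2.2.2.1.le)
      rw [heq] at hle
      exact branch7 ηm μm c L E (Em τ) hηm n6 hEpos hμm hc hLg (by linarith only [hle])
    · -- Sh+Eh+Ih hits Nh+E
      have h0 : Nh - (Sh τ + Eh τ + Ih τ) + ε * Real.exp (L * τ) = 0 :=
        le_antisymm hcs (hEdef ▸ n8)
      have heq : Sh τ + Eh τ + Ih τ = Nh + E := by rw [hEdef]; linarith only [h0]
      have hd : HasDerivAt (fun t => Nh - (Sh t + Eh t + Ih t) + ε * Real.exp (L * t))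
          (-(μh * Nh) + μh * (Sh τ + Eh τ + Ih τ) + ηh * Ih τ + L * E) τ := by
        have h := ((hasDerivAt_const τ Nh).sub (((hSh τ).add (hEh τ)).add (hIh τ))).add hδd
        refine h.congr_deriv ?_
        rw [hEdef, div_eq_mul_inv]
        try ring
      have hle := deriv_nonpos_left' hτpos hd h0
        (fun t a b => (hsplit t a b).2.2.2.2.2.2.2.1.le)
      rw [heq] at hle
      exact branch8 μh ηh L E (Ih τ) hμh hηh n3 hEpos hLb' (by linarith only [hle])
    · -- Am hits k Nh + E
      have h0 : k * Nh - Am τ + ε * Real.exp (L * τ) = 0 := le_antisymm hcs (hEdef ▸ n9)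
      have heq : Am τ = k * Nh + E := by rw [hEdef]; linarith only [h0]
      have hd : HasDerivAt (fun t => k * Nh - Am t + ε * Real.exp (L * t))
          (-(μb * (1 - Am τ * u) * (Sm τ + Em τ + Im τ)) + (ηA + μA) * Am τ + L * E) τ := by
        have h := ((hasDerivAt_const τ (k * Nh)).sub (hAm τ)).add hδd
        refine h.congr_deriv ?_
        rw [hEdef, hudef, div_eq_mul_inv]
        try ring
      have hle := deriv_nonpos_left' hτpos hd h0
        (fun t a b => (hsplit t a b).2.2.2.2.2.2.2.2.1.le)
      rw [heq] at hle
      have hfac : 1 - (k * Nh + E) * u = -(E * u) := by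
        have : (k * Nh + E) * u = k * Nh * u + E * u := by ring
        rw [this, hku]; ring
      rw [hfac] at hle
      exact branch9 μb ηA μA u L E (Sm τ + Em τ + Im τ) (k * Nh) hμb hu hEpos hE1
        (by linarith only [n5, n6, n7]) (mul_pos hk hNh) (by linarith only [hηA, hμA]) hLd
        (by linarith only [hle])
    · -- Sm+Em+Im hits m Nh + E
      have h0 : m * Nh - (Sm τ + Em τ + Im τ) + ε * Real.exp (L * τ) = 0 :=
        le_antisymm hcs (hEdef ▸ n10)
      have heq : Sm τ + Em τ + Im τ = m * Nh + E := by rw [hEdef]; linarith only [h0]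
      have hd : HasDerivAt (fun t => m * Nh - (Sm t + Em t + Im t) + ε * Real.exp (L * t))
          (-(ηA * Am τ) + (μm + c) * (Sm τ + Em τ + Im τ) + L * E) τ := by
        have h := ((hasDerivAt_const τ (m * Nh)).sub
          (((hSm τ).add (hEm τ)).add (hIm τ))).add hδd
        refine h.congr_deriv ?_
        rw [hEdef, div_eq_mul_inv]
        try ring
      have hle := deriv_nonpos_left' hτpos hd h0
        (fun t a b => (hsplit t a b).2.2.2.2.2.2.2.2.2.le)
      rw [heq] at hle
      exact branch10 ηA μm c L E (k * Nh) (m * Nh) (Am τ)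
        hηA (by linarith only [n9]) hEpos
        (by linarith only [mul_le_mul_of_nonneg_right hpar2 hNh.le])
        (by linarith only [hμm, hc]) hLh (by linarith only [hle])
  -- conclude by letting ε → 0
  have hCpos : (0:ℝ) < Real.exp (L * t0) := Real.exp_pos _
  have hbpos : (0:ℝ) < Real.exp (-(L * t0)) := Real.exp_pos _
  have f1 : 0 ≤ Sh t0 := eps_limit' hCpos hbpos
    (fun ε h1 h2 => (key ε h1 h2 t0 ht0 le_rfl).1)
  have f2 : 0 ≤ Eh t0 := eps_limit' hCpos hbpos
    (fun ε h1 h2 => (key ε h1 h2 t0 ht0 le_rfl).2.1)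
  have f3 : 0 ≤ Ih t0 := eps_limit' hCpos hbpos
    (fun ε h1 h2 => (key ε h1 h2 t0 ht0 le_rfl).2.2.1)
  have f4 : 0 ≤ Am t0 := eps_limit' hCpos hbpos
    (fun ε h1 h2 => (key ε h1 h2 t0 ht0 le_rfl).2.2.2.1)
  have f5 : 0 ≤ Sm t0 := eps_limit' hCpos hbpos
    (fun ε h1 h2 => (key ε h1 h2 t0 ht0 le_rfl).2.2.2.2.1)
  have f6 : 0 ≤ Em t0 := eps_limit' hCpos hbpos
    (fun ε h1 h2 => (key ε h1 h2 t0 ht0 le_rfl).2.2.2.2.2.1)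
  have f7 : 0 ≤ Im t0 := eps_limit' hCpos hbpos
    (fun ε h1 h2 => (key ε h1 h2 t0 ht0 le_rfl).2.2.2.2.2.2.1)
  have f8 : 0 ≤ Nh - (Sh t0 + Eh t0 + Ih t0) := eps_limit' hCpos hbpos
    (fun ε h1 h2 => (key ε h1 h2 t0 ht0 le_rfl).2.2.2.2.2.2.2.1)
  have f9 : 0 ≤ k * Nh - Am t0 := eps_limit' hCpos hbpos
    (fun ε h1 h2 => (key ε h1 h2 t0 ht0 le_rfl).2.2.2.2.2.2.2.2.1)
  have f10 : 0 ≤ m * Nh - (Sm t0 + Em t0 + Im t0) := eps_limit' hCpos hbpos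
    (fun ε h1 h2 => (key ε h1 h2 t0 ht0 le_rfl).2.2.2.2.2.2.2.2.2)
  exact ⟨f1, f2, f3, f4, f5, f6, f7, by linarith only [f8], by linarith only [f9],
    by linarith only [f10]⟩
end
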